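/- In a geometric lattice L of rank k, the Möbius function values μ(0̂, s) alternate in sign: (−1)^{rk(s)} μ(0̂, s) > 0 for every s ∈ L. -/

import Mathlib

/-- A finite partial order with rank function `rk` is a geometric lattice if it is a
finite lattice (all pairs have meets and joins), bounded, graded by `rk` (with
`rk ⊥ = 0` and covers raising rank by one), atomistic (every element is the least
upper bound of the rank-one elements below it), and semimodular
(`rk (a ⊔ b) + rk (a ⊓ b) ≤ rk a + rk b`). -/
def IsGeometricLattice {α : Type*} [PartialOrder α] (rk : α → ℕ) : Prop :=
  Finite α ∧
  (∃ bot : α, IsBot bot ∧ rk bot = 0) ∧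
  (∃ top : α, IsTop top) ∧
  (∀ a b : α, a ⋖ b → rk b = rk a + 1) ∧
  (∀ a b : α, ∃ m, IsGLB {a, b} m) ∧
  (∀ a b : α, ∃ j, IsLUB {a, b} j) ∧
  (∀ x : α, IsLUB {a | rk a = 1 ∧ a ≤ x} x) ∧
  (∀ a b m j : α, IsGLB {a, b} m → IsLUB {a, b} j → rk j + rk m ≤ rk a + rk b)

open scoped BigOperators

/-- In a geometric lattice `L` with bottom element `0̂`, the values of the Möbius
function `μ(0̂, s)` alternate in sign: `(−1)^{rk(s)} μ(0̂, s) > 0` for all `s`.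
Here `μ` is any function satisfying the defining recursion of the Möbius function
of the poset: `μ(s, s) = 1` and `Σ_{s ≤ u ≤ t} μ(s, u) = 0` whenever `s < t`. -/
theorem moebius_alternates {α : Type*} [PartialOrder α] (rk : α → ℕ) (k : ℕ)
    (h : IsGeometricLattice rk) (bot : α) (hbot : IsBot bot)
    (μ : α → α → ℤ)
    (hμ_refl : ∀ s : α, μ s s = 1)
    (hμ_sum : ∀ s t : α, s < t → ∑ᶠ u ∈ Set.Icc s t, μ s u = 0) :
    ∀ s : α, 0 < (-1 : ℤ) ^ rk s * μ bot s := by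
  classical
  obtain ⟨hfin, ⟨bot', hbot', hrk0'⟩, -, hcov, hglb, hlub, hatomistic, hsemi⟩ := h
  have : Fintype α := Fintype.ofFinite α
  have hbe : bot' = bot := le_antisymm (hbot' bot) (hbot bot')
  rw [hbe] at hrk0'
  -- chosen binary sups and infs
  choose sup hsup using hlub
  choose inf hinf using hglb
  have hle_sup_l : ∀ a b : α, a ≤ sup a b := fun a b =>
    (hsup a b).1 (Set.mem_insert _ _)
  have hle_sup_r : ∀ a b : α, b ≤ sup a b := fun a b =>
    (hsup a b).1 (Set.mem_insert_of_mem _ rfl)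
  have hsup_le : ∀ a b c : α, a ≤ c → b ≤ c → sup a b ≤ c := fun a b c h1 h2 =>
    (hsup a b).2 (by rintro x (rfl | hx); · exact h1
                     · rw [Set.mem_singleton_iff] at hx; subst hx; exact h2)
  have hinf_le_l : ∀ a b : α, inf a b ≤ a := fun a b =>
    (hinf a b).1 (Set.mem_insert _ _)
  have hinf_le_r : ∀ a b : α, inf a b ≤ b := fun a b =>
    (hinf a b).1 (Set.mem_insert_of_mem _ rfl)
  -- strict rank monotonicity
  have hmono : ∀ y x : α, x < y → rk x < rk y := by
    intro y
    induction y using WellFoundedLT.induction with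
    | _ y IH =>
      intro x hxy
      obtain ⟨z, hxz, hzy⟩ := exists_le_covBy_of_lt hxy
      have hy : rk y = rk z + 1 := hcov z y hzy
      rcases eq_or_lt_of_le hxz with rfl | hxz'
      · omega
      · have := IH z hzy.1 x hxz'
        omega
  have hmono' : ∀ x y : α, x ≤ y → rk x ≤ rk y := by
    intro x y hxy
    rcases eq_or_lt_of_le hxy with rfl | h'
    · exact le_refl _
    · exact (hmono y x h').le
  -- rank-0 elements are bot
  have hrk_eq_zero : ∀ x : α, rk x = 0 → x = bot := by
    intro x hx
    by_contra hne
    have : bot < x := lt_of_le_of_ne (hbot x) (Ne.symm hne)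
    have := hmono x bot this
    omega
  -- Möbius recursion in Finset form
  have hsum : ∀ s t : α, s < t →
      ∑ u ∈ Finset.univ.filter (fun u => s ≤ u ∧ u ≤ t), μ s u = 0 := by
    intro s t hst
    have h1 := hμ_sum s t hst
    have h2 : Set.Icc s t = ↑(Finset.univ.filter (fun u => s ≤ u ∧ u ≤ t)) := by
      ext u; simp [Set.mem_Icc]
    rw [h2, finsum_mem_coe_finset] at h1
    exact h1
  -- atoms meet: if a has rank 1 and a ≰ x then inf x a = bot
  have hinf_atom : ∀ x a : α, rk a = 1 → ¬ a ≤ x → rk (inf x a) = 0 := by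
    intro x a ha hax
    have h1 : inf x a ≤ a := hinf_le_r x a
    have h2 : inf x a ≠ a := by
      intro heq; exact hax (by rw [← heq]; exact hinf_le_l x a)
    have := hmono a (inf x a) (lt_of_le_of_ne h1 h2)
    omega
  -- Weisner's theorem
  have weisner : ∀ a : α, bot < a → ∀ n : ℕ, ∀ y : α, rk y = n → a ≤ y →
      ∑ x ∈ Finset.univ.filter (fun x => sup x a = y), μ bot x = 0 := by
    intro a hba n
    induction n using Nat.strong_induction_on with
    | _ n IH =>
      intro y hyn hay
      have hby : bot < y := lt_of_lt_of_le hba hay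
      have htotal := hsum bot y hby
      have hfib := Finset.sum_fiberwise_of_maps_to (g := fun x => sup x a)
        (s := Finset.univ.filter (fun x => x ≤ y))
        (t := Finset.univ.filter (fun y' => a ≤ y' ∧ y' ≤ y))
        (f := fun x => μ bot x)
        (by intro x hx
            simp only [Finset.mem_filter, Finset.mem_univ, true_and] at hx ⊢
            exact ⟨le_trans (hle_sup_r x a) (le_refl _), hsup_le x a y hx hay⟩)
      have hset : Finset.univ.filter (fun u => bot ≤ u ∧ u ≤ y)
          = Finset.univ.filter (fun x => x ≤ y) := by
        ext x; simp [hbot x]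
      rw [hset] at htotal
      rw [htotal] at hfib
      -- inner fibers equal unrestricted fibers
      have hinner : ∀ y' : α, a ≤ y' → y' ≤ y →
          ((Finset.univ.filter (fun x => x ≤ y)).filter (fun x => sup x a = y'))
            = Finset.univ.filter (fun x => sup x a = y') := by
        intro y' hay' hy'y
        ext x
        simp only [Finset.mem_filter, Finset.mem_univ, true_and, and_iff_right_iff_imp]
        intro hx
        exact le_trans (le_trans (hle_sup_l x a) hx.le) hy'y
      have hmem : y ∈ Finset.univ.filter (fun y' => a ≤ y' ∧ y' ≤ y) := by
        simp [hay]
      have hzero : ∀ y' ∈ Finset.univ.filter (fun y' => a ≤ y' ∧ y' ≤ y), y' ≠ y →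
          (∑ x ∈ (Finset.univ.filter (fun x => x ≤ y)).filter
              (fun x => sup x a = y'), μ bot x) = 0 := by
        intro y' hy' hne
        simp only [Finset.mem_filter, Finset.mem_univ, true_and] at hy'
        rw [hinner y' hy'.1 hy'.2]
        exact IH (rk y') (by rw [← hyn]; exact hmono y y' (lt_of_le_of_ne hy'.2 hne))
          y' rfl hy'.1
      have := Finset.sum_eq_single_of_mem y hmem hzero
      rw [hfib] at this
      rw [hinner y hay (le_refl y)] at this
      exact this.symm
  -- main induction
  suffices main : ∀ n : ℕ, ∀ s : α, rk s = n → 0 < (-1 : ℤ) ^ n * μ bot s by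
    intro s; exact main (rk s) s rfl
  intro n
  induction n using Nat.strong_induction_on with
  | _ n IH =>
    intro s hs
    rcases n with - | m
    · have : s = bot := hrk_eq_zero s hs
      subst this
      simp [hμ_refl]
    · -- s > bot, pick an atom a ≤ s
      have hsbot : s ≠ bot := by
        intro hq; rw [hq, hrk0'] at hs; omega
      have hbs : bot < s := lt_of_le_of_ne (hbot s) (Ne.symm hsbot)
      obtain ⟨a, ha1, has⟩ : ∃ a, rk a = 1 ∧ a ≤ s := by
        by_contra hc
        push_neg at hc
        have hempty : {a : α | rk a = 1 ∧ a ≤ s} = ∅ := by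
          ext x; simp only [Set.mem_setOf_eq, Set.mem_empty_iff_false, iff_false, not_and]
          exact hc x
        have hlub := hatomistic s
        rw [hempty] at hlub
        have : s ≤ bot := hlub.2 (by intro x hx; exact absurd hx (Set.notMem_empty x))
        exact hsbot (le_antisymm this (hbot s))
      have hba : bot < a := by
        refine lt_of_le_of_ne (hbot a) fun hq => ?_
        rw [← hq, hrk0'] at ha1; omega
      -- the Weisner fiber at s
      set F : Finset α := Finset.univ.filter (fun x => sup x a = s) with hF
      have hsF : s ∈ F := by
        have : sup s a = s := le_antisymm (hsup_le s a s (le_refl s) has) (hle_sup_l s a)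
        simp [hF, this]
      have hN : ∑ x ∈ F, μ bot x = 0 := weisner a hba (rk s) s rfl has
      have hsplit : μ bot s + ∑ x ∈ F.erase s, μ bot x = 0 := by
        rw [Finset.add_sum_erase F (fun x => μ bot x) hsF]; exact hN
      -- every element of the punctured fiber has rank m
      have hrkF : ∀ x ∈ F.erase s, rk x = m := by
        intro x hx
        obtain ⟨hxs, hxF⟩ := Finset.mem_erase.mp hx
        simp only [hF, Finset.mem_filter, Finset.mem_univ, true_and] at hxF
        have hxle : x ≤ s := by rw [← hxF]; exact hle_sup_l x a
        have hxlt : x < s := lt_of_le_of_ne hxle hxs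
        have hax : ¬ a ≤ x := by
          intro hax
          exact hxs (le_antisymm hxle (by rw [← hxF]; exact hsup_le x a x (le_refl x) hax))
        have hsemix := hsemi x a (inf x a) (sup x a) (hinf x a) (hsup x a)
        rw [hxF] at hsemix
        have h0 : rk (inf x a) = 0 := hinf_atom x a ha1 hax
        have hlt := hmono s x hxlt
        omega
      -- the punctured fiber is nonempty
      have hne : (F.erase s).Nonempty := by
        set T : Finset α := Finset.univ.filter (fun x => x ≤ s ∧ ¬ a ≤ x) with hT
        have hbotT : bot ∈ T := by
          simp only [hT, Finset.mem_filter, Finset.mem_univ, true_and]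
          exact ⟨hbot s, fun hq => absurd (le_antisymm hq (hbot a)) (ne_of_gt hba)⟩
        obtain ⟨x0, hx0T, hx0max⟩ : ∃ m ∈ T, ∀ x ∈ T, ¬ m < x := by
          obtain ⟨m, hm⟩ := Finset.exists_maximal (s := T) ⟨bot, hbotT⟩
          exact ⟨m, hm.1, fun x hx hlt => hlt.not_ge (hm.2 hx hlt.le)⟩
        simp only [hT, Finset.mem_filter, Finset.mem_univ, true_and] at hx0T
        obtain ⟨hx0s, hax0⟩ := hx0T
        -- claim: sup x0 a = s
        have hkey : sup x0 a = s := by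
          by_contra hne'
          have hjs : sup x0 a < s :=
            lt_of_le_of_ne (hsup_le x0 a s hx0s has) hne'
          -- there is an atom b ≤ s not below j := sup x0 a
          obtain ⟨b, hb⟩ : ∃ b, (rk b = 1 ∧ b ≤ s) ∧ ¬ b ≤ sup x0 a := by
            by_contra hc
            push_neg at hc
            have : s ≤ sup x0 a := (hatomistic s).2 (fun x hx => hc x hx)
            exact absurd this (not_le_of_gt hjs)
          obtain ⟨⟨hb1, hbs'⟩, hbj⟩ := hb
          have hbx0 : ¬ b ≤ x0 := fun hq => hbj (le_trans hq (hle_sup_l x0 a))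
          have hx0x' : x0 < sup x0 b := by
            refine lt_of_le_of_ne (hle_sup_l x0 b) fun hq => ?_
            exact hbx0 (hq ▸ hle_sup_r x0 b)
          have hx's : sup x0 b ≤ s := hsup_le x0 b s hx0s hbs'
          -- by maximality, a ≤ sup x0 b
          have hax' : a ≤ sup x0 b := by
            by_contra hax'
            refine hx0max (sup x0 b) ?_ hx0x'
            simp only [hT, Finset.mem_filter, Finset.mem_univ, true_and]
            exact ⟨hx's, hax'⟩
          have hjx' : sup x0 a ≤ sup x0 b := hsup_le x0 a _ (hle_sup_l x0 b) hax'
          -- rank computations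
          have hsemib := hsemi x0 b (inf x0 b) (sup x0 b) (hinf x0 b) (hsup x0 b)
          have h0b : rk (inf x0 b) = 0 := hinf_atom x0 b hb1 hbx0
          have hx0j : x0 < sup x0 a := by
            refine lt_of_le_of_ne (hle_sup_l x0 a) fun hq => ?_
            exact hax0 (hq ▸ hle_sup_r x0 a)
          have h1' := hmono (sup x0 a) x0 hx0j
          have h2' := hmono' _ _ hjx'
          have heq : sup x0 a = sup x0 b := by
            rcases eq_or_lt_of_le hjx' with hq | hq
            · exact hq
            · have := hmono _ _ hq; omega
          exact hbj (heq ▸ hle_sup_r x0 b)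
        refine ⟨x0, Finset.mem_erase.mpr ⟨?_, ?_⟩⟩
        · intro hq; subst hq; exact hax0 has
        · simp [hF, hkey]
      -- conclude positivity
      have hpos : 0 < ∑ x ∈ F.erase s, (-1 : ℤ) ^ m * μ bot x := by
        refine Finset.sum_pos ?_ hne
        intro x hx
        exact IH m (Nat.lt_succ_self m) x (hrkF x hx)
      have hμs : μ bot s = -∑ x ∈ F.erase s, μ bot x := by linarith
      calc (0 : ℤ) < ∑ x ∈ F.erase s, (-1 : ℤ) ^ m * μ bot x := hpos
        _ = (-1 : ℤ) ^ (m + 1) * μ bot s := by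
            rw [hμs, ← Finset.mul_sum]
            ring
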